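/- Let A1 ... An (n ≥ 3) be a polygon inscribed in a circle K with center M_K and radius R_K and circumscribed about a circle C with center M_C and radius R_C, with d = dist(M_C, M_K) and d ≠ R_K. For each i, let N_i be the intersection of the external angle bisectors at A_i and A_{i+1} (the center of the excircle touching side a_i). Then all N_i lie on one circle E with radius R_E = |R_K² − d²| / R_C, and the center M_E of E satisfies M_K = (M_C + M_E)/2. -/

import Mathlib

open EuclideanGeometry Metric

lemma dist_sq_coord (x y : EuclideanSpace ℝ (Fin 2)) :
    dist x y ^ 2 = (x 0 - y 0) ^ 2 + (x 1 - y 1) ^ 2 := by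
  rw [EuclideanSpace.dist_eq, Real.sq_sqrt (by positivity)]
  simp [Fin.sum_univ_two, Real.dist_eq, sq_abs]

lemma inner_coord (x y : EuclideanSpace ℝ (Fin 2)) :
    (inner ℝ x y : ℝ) = x 0 * y 0 + x 1 * y 1 := by
  simp [PiLp.inner_apply, RCLike.inner_apply, Fin.sum_univ_two, mul_comm]


/-- Main theorem: the centers of the excircles of a bicentric polygon are concyclic on a
circle `E` with radius `|R_K² - d²| / R_C`, and the circumcenter `M_K` is the midpoint of
the incenter `M_C` and the center `M_E` of `E`.  The excenter `N i` is the intersection of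
the external angle bisectors at `A i` and `A (i+1)`, each external bisector being the
perpendicular through the vertex to the internal bisector (which passes through `M_C`). -/
theorem bicentric_excenters_concyclic {n : ℕ} [NeZero n] (hn : 3 ≤ n)
    (A N : Fin n → EuclideanSpace ℝ (Fin 2)) (M_C M_K : EuclideanSpace ℝ (Fin 2))
    (R_C R_K : ℝ) (hRC : 0 < R_C) (hRK : 0 < R_K)
    (hsides : ∀ i, A i ≠ A (i + 1))
    (hK : ∀ i, dist (A i) M_K = R_K)
    (hC : ∀ i, Metric.infDist M_C
      (affineSpan ℝ ({A i, A (i + 1)} : Set (EuclideanSpace ℝ (Fin 2))) :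
        Set (EuclideanSpace ℝ (Fin 2))) = R_C)
    (hd : dist M_C M_K ≠ R_K)
    (hN : ∀ i, inner ℝ (N i - A i) (M_C - A i) = (0 : ℝ) ∧
      inner ℝ (N i - A (i + 1)) (M_C - A (i + 1)) = (0 : ℝ)) :
    ∃ M_E : EuclideanSpace ℝ (Fin 2), M_K = midpoint ℝ M_C M_E ∧
      ∀ i, dist (N i) M_E = |R_K ^ 2 - dist M_C M_K ^ 2| / R_C := by
  refine ⟨(2:ℝ) • M_K - M_C, by rw [midpoint_eq_smul_add, invOf_eq_inv]; module, fun i => ?_⟩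
  -- orthogonal projection of M_C on the side line
  obtain ⟨q, t, hqd, hperp, ht⟩ : ∃ q : EuclideanSpace ℝ (Fin 2), ∃ t : ℝ,
      dist M_C q = R_C ∧ (inner ℝ (M_C - q) (A (i+1) - A i) : ℝ) = 0 ∧
      q - A i = t • (A (i+1) - A i) := by
    set s := affineSpan ℝ ({A i, A (i+1)} : Set (EuclideanSpace ℝ (Fin 2))) with hs
    have hmem_a : A i ∈ s := mem_affineSpan ℝ (by simp)
    have hmem_b : A (i+1) ∈ s := mem_affineSpan ℝ (by simp)
    haveI : Nonempty s := ⟨⟨A i, hmem_a⟩⟩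
    set q : EuclideanSpace ℝ (Fin 2) := ↑(EuclideanGeometry.orthogonalProjection s M_C) with hq
    have hqmem : q ∈ s := orthogonalProjection_mem M_C
    have hqdist : dist M_C q = R_C := by
      rw [← hC i]
      refine (le_antisymm (Metric.infDist_le_dist_of_mem hqmem) ?_).symm
      rw [Metric.infDist_eq_iInf]
      refine le_ciInf fun y => ?_
      have h := dist_sq_eq_dist_orthogonalProjection_sq_add_dist_orthogonalProjection_sq (s := s)
        M_C y.2
      rw [← hq] at h
      have h2 : dist M_C (y : EuclideanSpace ℝ (Fin 2)) = dist (y : EuclideanSpace ℝ (Fin 2)) M_C :=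
        dist_comm _ _
      nlinarith [dist_nonneg (x := (y:EuclideanSpace ℝ (Fin 2))) (y := q),
        dist_nonneg (x := (y:EuclideanSpace ℝ (Fin 2))) (y := M_C),
        dist_nonneg (x := M_C) (y := q)]
    have hqperp : (inner ℝ (M_C - q) (A (i+1) - A i) : ℝ) = 0 := by
      have h1 : M_C -ᵥ q ∈ s.directionᗮ := vsub_orthogonalProjection_mem_direction_orthogonal s M_C
      have h2 : A (i+1) -ᵥ A i ∈ s.direction := AffineSubspace.vsub_mem_direction hmem_b hmem_a
      have := (Submodule.mem_orthogonal _ _).mp h1 _ h2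
      rwa [real_inner_comm] at this
    obtain ⟨t, ht⟩ : ∃ t : ℝ, q - A i = t • (A (i+1) - A i) := by
      have hdir : q -ᵥ A i ∈ s.direction := AffineSubspace.vsub_mem_direction hqmem hmem_a
      rw [hs, direction_affineSpan, vectorSpan_pair] at hdir
      obtain ⟨t, ht⟩ := Submodule.mem_span_singleton.mp hdir
      exact ⟨-t, by simp only [vsub_eq_sub] at ht; rw [← ht]; module⟩
    exact ⟨q, t, hqdist, hqperp, ht⟩
  -- coordinates
  set a0 := A i 0; set a1 := A i 1; set b0 := A (i+1) 0; set b1 := A (i+1) 1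
  set c0 := M_C 0; set c1 := M_C 1; set k0 := M_K 0; set k1 := M_K 1
  set x0 := N i 0; set x1 := N i 1; set q0 := q 0; set q1 := q 1
  set D := dist M_C M_K with hD
  set w0 : ℝ := x0 - 2*k0 + c0 with hw0
  set w1 : ℝ := x1 - 2*k1 + c1 with hw1
  have hNa' : (x0-a0)*(c0-a0)+(x1-a1)*(c1-a1) = 0 := by
    have := (hN i).1; rw [inner_coord] at this; simpa using this
  have hNb' : (x0-b0)*(c0-b0)+(x1-b1)*(c1-b1) = 0 := by
    have := (hN i).2; rw [inner_coord] at this; simpa using this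
  have hKa' : (a0-k0)^2+(a1-k1)^2 = R_K^2 := by rw [← dist_sq_coord, hK i]
  have hKb' : (b0-k0)^2+(b1-k1)^2 = R_K^2 := by rw [← dist_sq_coord, hK (i+1)]
  have hD' : (c0-k0)^2+(c1-k1)^2 = D^2 := by rw [hD, dist_sq_coord]
  have hqd' : (c0-q0)^2+(c1-q1)^2 = R_C^2 := by rw [← dist_sq_coord, hqd]
  have hperp' : (c0-q0)*(b0-a0)+(c1-q1)*(b1-a1) = 0 := by
    rw [inner_coord] at hperp; simpa using hperp
  have ht0 : q0 - a0 = t*(b0-a0) := by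
    have := congrArg (fun v : EuclideanSpace ℝ (Fin 2) => v 0) ht; simpa using this
  have ht1 : q1 - a1 = t*(b1-a1) := by
    have := congrArg (fun v : EuclideanSpace ℝ (Fin 2) => v 1) ht; simpa using this
  have hab : ¬(b0 - a0 = 0 ∧ b1 - a1 = 0) := by
    rintro ⟨h0, h1⟩
    apply hsides i
    ext j
    fin_cases j
    · show A i 0 = A (i+1) 0; linarith
    · show A i 1 = A (i+1) 1; linarith
  -- algebra
  have ea : (a0-c0)*w0 + (a1-c1)*w1 = R_K^2 - D^2 := by
    rw [hw0, hw1]; linear_combination -hNa' + hKa' - hD'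
  have eb : (b0-c0)*w0 + (b1-c1)*w1 = R_K^2 - D^2 := by
    rw [hw0, hw1]; linear_combination -hNb' + hKb' - hD'
  have eab : (b0-a0)*w0 + (b1-a1)*w1 = 0 := by linear_combination eb - ea
  have eq1 : (q0-c0)*w0 + (q1-c1)*w1 = R_K^2 - D^2 := by
    linear_combination ea + w0*ht0 + w1*ht1 + t*eab
  have cross : (c0-q0)*w1 - (c1-q1)*w0 = 0 := by
    rcases not_and_or.mp hab with h | h
    · apply mul_left_cancel₀ h
      linear_combination w1*hperp' - (c1-q1)*eab
    · apply mul_left_cancel₀ h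
      linear_combination -(w0*hperp') + (c0-q0)*eab
  have key : ((q0-c0)*w0+(q1-c1)*w1)^2 = ((c0-q0)^2+(c1-q1)^2)*(w0^2+w1^2) := by
    linear_combination (-(c0-q0)*w1 + (c1-q1)*w0) * cross
  have h1 : ((q0-c0)*w0+(q1-c1)*w1)^2 = (R_K^2-D^2)^2 := by
    linear_combination ((q0-c0)*w0+(q1-c1)*w1 + (R_K^2-D^2)) * eq1
  have h2 : R_C^2*(w0^2+w1^2) = (R_K^2-D^2)^2 := by
    linear_combination h1 - key - (w0^2+w1^2)*hqd'
  have hds : dist (N i) ((2:ℝ) • M_K - M_C) ^ 2 = w0^2 + w1^2 := by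
    rw [dist_sq_coord]
    have e0 : ((2:ℝ) • M_K - M_C) 0 = 2*k0 - c0 := by simp [two_smul]; ring
    have e1 : ((2:ℝ) • M_K - M_C) 1 = 2*k1 - c1 := by simp [two_smul]; ring
    rw [e0, e1, hw0, hw1]; ring
  refine (sq_eq_sq₀ dist_nonneg (by positivity)).mp ?_
  rw [hds, div_pow, sq_abs]
  rw [eq_div_iff (by positivity)]
  linarith [h2]
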